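/- arXiv:1602.00960 — 2 statements merged into one kernel-verified Lean document; each statement's English description precedes it below -/
import Mathlib

section
/- For convex bodies C, K in ℂ, the complex difference body operator is symmetric: D_C K = D_K C. -/
open MeasureTheory Pointwise

/-- The support function of a set `A` in the direction `ξ`. -/
noncomputable def hsupp {V : Type*} [NormedAddCommGroup V] [InnerProductSpace ℂ V]
    (A : Set V) (ξ : V) : ℝ :=
  sSup ((fun x => (inner ℂ x ξ : ℂ).re) '' A)

instance : Fact (0 < 2 * Real.pi) := ⟨by positivity⟩

/-- The representative in `[0, 2π)` of a point of the circle `ℝ/2πℤ`. -/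
noncomputable def angRepr (x : AddCircle (2 * Real.pi)) : ℝ :=
  (AddCircle.equivIco (2 * Real.pi) 0 x : ℝ)

/-- The support function of a planar set as a `2π`-periodic function of the angle. -/
noncomputable def hfun (A : Set ℂ) (θ : ℝ) : ℝ := hsupp A (Complex.exp (θ * Complex.I))

/-- `μ` is the surface area measure of the planar convex body with underlying set `L`:
for every `C²` `2π`-periodic test function `φ`, `∫ φ dμ = ∫ h_L (φ'' + φ)`. -/
def IsSAM (L : Set ℂ) (μ : Measure (AddCircle (2 * Real.pi))) : Prop :=
  ∀ φ : ℝ → ℝ, ContDiff ℝ 2 φ → (∀ t, φ (t + 2 * Real.pi) = φ t) →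
    ∫ x, φ (angRepr x) ∂μ
      = ∫ t in (0:ℝ)..(2 * Real.pi), hfun L t * (deriv (deriv φ) t + φ t)

/-- `D = D_C K`: `h(D, ξ) = ∫_{S¹} h(αK, ξ) dS(C, α)`, where `μ` is the surface area
measure of `C` and `α • K` is the action of `α = e^{iθ} ∈ S¹` by complex scalar
multiplication. -/
def IsCDB {V : Type*} [NormedAddCommGroup V] [InnerProductSpace ℂ V]
    (μ : Measure (AddCircle (2 * Real.pi))) (K D : Set V) : Prop :=
  ∀ ξ : V, hsupp D ξ = ∫ x, hsupp (Complex.exp (angRepr x * Complex.I) • K) ξ ∂μ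



open Complex in
lemma hsupp_rot (K : Set ℂ) (α ξ : ℂ) :
    hsupp (α • K) ξ = hsupp K ((starRingEnd ℂ) α * ξ) := by
  unfold hsupp
  congr 1
  rw [← Set.image_smul, Set.image_image]
  apply Set.image_congr
  intro x _
  simp only [RCLike.inner_apply, smul_eq_mul, map_mul]
  ring_nf

open Complex in
lemma hsupp_exp_smul (K : Set ℂ) (α θ : ℝ) :
    hsupp (Complex.exp (α * Complex.I) • K) (Complex.exp (θ * Complex.I))
      = hfun K (θ - α) := by
  rw [hsupp_rot]
  unfold hfun
  congr 2
  rw [← Complex.exp_conj, ← Complex.exp_add]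
  congr 1
  simp [Complex.conj_I]
  push_cast
  ring

lemma coe_angRepr (x : AddCircle (2 * Real.pi)) :
    ((angRepr x : ℝ) : AddCircle (2 * Real.pi)) = x :=
  (AddCircle.equivIco (2 * Real.pi) 0).symm_apply_apply x

lemma angRepr_mem (x : AddCircle (2 * Real.pi)) :
    angRepr x ∈ Set.Ico (0:ℝ) (2 * Real.pi) := by
  have := (AddCircle.equivIco (2 * Real.pi) 0 x).2
  simpa [angRepr] using this

lemma hsupp_smul_nonneg (A : Set ℂ) {r : ℝ} (hr : 0 ≤ r) (ξ : ℂ) :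
    hsupp A (r • ξ) = r * hsupp A ξ := by
  unfold hsupp
  have h : (fun x => (inner ℂ x (r • ξ) : ℂ).re) '' A
      = r • ((fun x => (inner ℂ x ξ : ℂ).re) '' A) := by
    rw [← Set.image_smul, Set.image_image]
    apply Set.image_congr
    intro x _
    have h2 : (inner ℂ x (r • ξ) : ℂ) = (r : ℂ) * inner ℂ x ξ := by
      simp only [RCLike.inner_apply, Complex.real_smul]; ring
    rw [h2]
    simp [Complex.mul_re]
  rw [h, Real.sSup_smul_of_nonneg hr, smul_eq_mul]

lemma hsupp_zero_dir (A : Set ℂ) (hA : A.Nonempty) : hsupp A 0 = 0 := by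
  unfold hsupp
  have : (fun x => (inner ℂ x (0:ℂ) : ℂ).re) '' A = {0} := by
    have : (fun x => (inner ℂ x (0:ℂ) : ℂ).re) = fun _ => (0:ℝ) := by
      funext x; simp [inner_zero_right]
    rw [this, Set.Nonempty.image_const hA]
  rw [this, csSup_singleton]

lemma hsupp_le_add (K : ConvexBody ℂ) {R : ℝ} (hR : ∀ x ∈ (K : Set ℂ), ‖x‖ ≤ R)
    (ξ η : ℂ) : hsupp (K : Set ℂ) ξ ≤ hsupp (K : Set ℂ) η + R * ‖ξ - η‖ := by
  unfold hsupp
  apply csSup_le ((K.nonempty).image _)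
  rintro y ⟨x, hx, rfl⟩
  have h1 : (inner ℂ x ξ : ℂ).re = (inner ℂ x η : ℂ).re + (inner ℂ x (ξ - η) : ℂ).re := by
    rw [← Complex.add_re, ← inner_add_right]; ring_nf
  have h2 : (inner ℂ x (ξ - η) : ℂ).re ≤ R * ‖ξ - η‖ := by
    calc (inner ℂ x (ξ - η) : ℂ).re ≤ ‖(inner ℂ x (ξ - η) : ℂ)‖ := Complex.re_le_norm _
    _ ≤ ‖x‖ * ‖ξ - η‖ := norm_inner_le_norm _ _
    _ ≤ R * ‖ξ - η‖ := by
        apply mul_le_mul_of_nonneg_right (hR x hx) (norm_nonneg _)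
  have hcont : ContinuousOn (fun x : ℂ => (inner ℂ x η : ℂ).re) (K : Set ℂ) :=
    (Complex.continuous_re.comp (continuous_id.inner continuous_const)).continuousOn
  have h3 : (inner ℂ x η : ℂ).re ≤ sSup ((fun x => (inner ℂ x η : ℂ).re) '' (K : Set ℂ)) :=
    le_csSup (K.isCompact.image_of_continuousOn hcont).bddAbove ⟨x, hx, rfl⟩
  linarith

lemma continuous_hsupp (K : ConvexBody ℂ) : Continuous (hsupp (K : Set ℂ)) := by
  obtain ⟨R, hR⟩ := K.isCompact.isBounded.exists_norm_le
  have hR0 : 0 ≤ R := le_trans (norm_nonneg _) (hR _ K.nonempty.choose_spec)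
  apply (LipschitzWith.of_dist_le_mul (K := R.toNNReal)
    (f := hsupp (K : Set ℂ)) ?_).continuous
  intro ξ η
  rw [Real.coe_toNNReal _ hR0, Real.dist_eq, dist_eq_norm]
  rw [abs_sub_le_iff]
  constructor
  · have := hsupp_le_add K hR ξ η; linarith
  · have := hsupp_le_add K hR η ξ
    rw [show ‖η - ξ‖ = ‖ξ - η‖ from norm_sub_rev _ _] at this; linarith

lemma continuous_hfun (K : ConvexBody ℂ) : Continuous (hfun (K : Set ℂ)) := by
  apply (continuous_hsupp K).comp
  exact Complex.continuous_exp.comp ((Complex.continuous_ofReal).mul continuous_const)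

lemma hfun_periodic (A : Set ℂ) : Function.Periodic (hfun A) (2 * Real.pi) := by
  intro t
  unfold hfun
  have : ((t + 2 * Real.pi : ℝ) : ℂ) * Complex.I
      = t * Complex.I + 2 * Real.pi * Complex.I := by push_cast; ring
  rw [this, Complex.exp_add, Complex.exp_two_pi_mul_I, mul_one]

noncomputable def liftH (A : Set ℂ) : AddCircle (2 * Real.pi) → ℝ :=
  (hfun_periodic A).lift

lemma liftH_coe (A : Set ℂ) (t : ℝ) : liftH A ↑t = hfun A t := rfl

lemma continuous_liftH (K : ConvexBody ℂ) : Continuous (liftH (K : Set ℂ)) := by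
  have he : liftH (K : Set ℂ) = AddCircle.liftIco (2 * Real.pi) 0 (hfun (K : Set ℂ)) := by
    funext y
    conv_lhs => rw [← coe_angRepr y]
    conv_rhs => rw [← coe_angRepr y]
    rw [liftH_coe, AddCircle.liftIco_coe_apply]
    simpa using angRepr_mem y
  rw [he]
  apply AddCircle.liftIco_continuous
  · simpa using ((hfun_periodic (K : Set ℂ)) 0).symm
  · exact (continuous_hfun K).continuousOn

lemma cont_integrable {E : Type*} [NormedAddCommGroup E] {f : AddCircle (2 * Real.pi) → E}
    (hf : Continuous f) (μ : Measure (AddCircle (2 * Real.pi))) [IsFiniteMeasure μ] :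
    Integrable f μ :=
  hf.integrable_of_hasCompactSupport ((isClosed_tsupport f).isCompact)

lemma fourier_coe_pi (n : ℤ) (t : ℝ) :
    fourier n (↑t : AddCircle (2 * Real.pi)) = Complex.exp ((((n : ℝ) * t : ℝ) : ℂ) * Complex.I) := by
  rw [fourier_coe_apply]
  congr 1
  have hπ : (Real.pi : ℂ) ≠ 0 := by exact_mod_cast Real.pi_ne_zero
  push_cast
  field_simp

lemma fourier_neg_coe (n : ℤ) (t : ℝ) :
    fourier (-n) (↑t : AddCircle (2 * Real.pi))
      = ((Real.cos ((n : ℝ) * t) : ℝ) : ℂ) - ((Real.sin ((n : ℝ) * t) : ℝ) : ℂ) * Complex.I := by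
  rw [fourier_coe_pi]
  rw [Complex.exp_mul_I]
  push_cast
  rw [show (-(n : ℂ) * (t : ℂ)) = -((n : ℂ) * t) by ring, Complex.cos_neg, Complex.sin_neg]
  ring

lemma fourier_pt_add (n : ℤ) (a b : AddCircle (2 * Real.pi)) :
    fourier n (a + b) = fourier n a * fourier n b := by
  simp only [fourier_apply, smul_add, AddCircle.toCircle_add, Circle.coe_mul]

lemma deriv2_cos (a : ℝ) :
    deriv (deriv (fun t : ℝ => Real.cos (a * t))) = fun t => -(a ^ 2) * Real.cos (a * t) := by
  have h1 : ∀ t : ℝ, HasDerivAt (fun u : ℝ => Real.cos (a * u)) (-(a * Real.sin (a * t))) t := by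
    intro t
    have := (Real.hasDerivAt_cos (a * t)).comp t ((hasDerivAt_id t).const_mul a)
    simpa [mul_comm, Function.comp_def] using this
  have hd1 : deriv (fun t : ℝ => Real.cos (a * t)) = fun t => -(a * Real.sin (a * t)) :=
    funext fun t => (h1 t).deriv
  rw [hd1]
  funext t
  have h2 : HasDerivAt (fun u : ℝ => -(a * Real.sin (a * u))) (-(a ^ 2) * Real.cos (a * t)) t := by
    have := (((Real.hasDerivAt_sin (a * t)).comp t ((hasDerivAt_id t).const_mul a)).const_mul a).neg
    exact this.congr_deriv (by ring)
  exact h2.deriv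

lemma deriv2_sin (a : ℝ) :
    deriv (deriv (fun t : ℝ => Real.sin (a * t))) = fun t => -(a ^ 2) * Real.sin (a * t) := by
  have h1 : ∀ t : ℝ, HasDerivAt (fun u : ℝ => Real.sin (a * u)) (a * Real.cos (a * t)) t := by
    intro t
    have := (Real.hasDerivAt_sin (a * t)).comp t ((hasDerivAt_id t).const_mul a)
    simpa [mul_comm, Function.comp_def] using this
  have hd1 : deriv (fun t : ℝ => Real.sin (a * t)) = fun t => a * Real.cos (a * t) :=
    funext fun t => (h1 t).deriv
  rw [hd1]
  funext t
  have h2 : HasDerivAt (fun u : ℝ => a * Real.cos (a * u)) (-(a ^ 2) * Real.sin (a * t)) t := by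
    have := ((Real.hasDerivAt_cos (a * t)).comp t ((hasDerivAt_id t).const_mul a)).const_mul a
    exact this.congr_deriv (by ring)
  exact h2.deriv

lemma contDiff_cos_mul (a : ℝ) : ContDiff ℝ 2 (fun t : ℝ => Real.cos (a * t)) :=
  (Real.contDiff_cos.comp (contDiff_const.mul contDiff_id)).of_le le_top

lemma contDiff_sin_mul (a : ℝ) : ContDiff ℝ 2 (fun t : ℝ => Real.sin (a * t)) :=
  (Real.contDiff_sin.comp (contDiff_const.mul contDiff_id)).of_le le_top

lemma cos_angRepr_eq (n : ℤ) (x : AddCircle (2 * Real.pi)) :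
    Real.cos ((n : ℝ) * angRepr x) = (fourier n x).re := by
  conv_rhs => rw [← coe_angRepr x, fourier_coe_pi]
  rw [Complex.exp_ofReal_mul_I_re]

lemma sin_angRepr_eq (n : ℤ) (x : AddCircle (2 * Real.pi)) :
    Real.sin ((n : ℝ) * angRepr x) = (fourier n x).im := by
  conv_rhs => rw [← coe_angRepr x, fourier_coe_pi]
  rw [Complex.exp_ofReal_mul_I_im]

lemma sam_fourier (L : ConvexBody ℂ) (μ : Measure (AddCircle (2 * Real.pi)))
    [IsFiniteMeasure μ] (hμ : IsSAM (L : Set ℂ) μ) (n : ℤ) :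
    ∫ x, fourier (-n) x ∂μ
      = (1 - (n : ℂ) ^ 2)
          * ∫ t in (0:ℝ)..(2 * Real.pi), ((hfun (L : Set ℂ) t : ℝ) : ℂ) * fourier (-n) (t : AddCircle (2 * Real.pi)) := by
  set a : ℝ := (n : ℝ) with ha
  -- the two real identities from IsSAM
  have hcos := hμ (fun t => Real.cos (a * t)) (contDiff_cos_mul a) (fun t => by
    simp only [ha]
    rw [mul_add]
    exact_mod_cast Real.cos_add_int_mul_two_pi (a * t) n)
  have hsin := hμ (fun t => Real.sin (a * t)) (contDiff_sin_mul a) (fun t => by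
    simp only [ha]
    rw [mul_add]
    exact_mod_cast Real.sin_add_int_mul_two_pi (a * t) n)
  rw [deriv2_cos] at hcos
  rw [deriv2_sin] at hsin
  have hALg : (fun t => hfun (L : Set ℂ) t * (-(a ^ 2) * Real.cos (a * t) + Real.cos (a * t)))
      = fun t => (1 - a ^ 2) * (hfun (L : Set ℂ) t * Real.cos (a * t)) := by
    funext t; ring
  have hBLg : (fun t => hfun (L : Set ℂ) t * (-(a ^ 2) * Real.sin (a * t) + Real.sin (a * t)))
      = fun t => (1 - a ^ 2) * (hfun (L : Set ℂ) t * Real.sin (a * t)) := by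
    funext t; ring
  rw [hALg, intervalIntegral.integral_const_mul] at hcos
  rw [hBLg, intervalIntegral.integral_const_mul] at hsin
  -- integrability of real and imaginary parts w.r.t. μ
  have hcosc : Continuous (fun x : AddCircle (2 * Real.pi) => Real.cos (a * angRepr x)) := by
    have : (fun x : AddCircle (2 * Real.pi) => Real.cos (a * angRepr x))
        = fun x => (fourier n x).re := funext fun x => cos_angRepr_eq n x
    rw [this]; exact Complex.continuous_re.comp (fourier n).continuous
  have hsinc : Continuous (fun x : AddCircle (2 * Real.pi) => Real.sin (a * angRepr x)) := by
    have : (fun x : AddCircle (2 * Real.pi) => Real.sin (a * angRepr x))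
        = fun x => (fourier n x).im := funext fun x => sin_angRepr_eq n x
    rw [this]; exact Complex.continuous_im.comp (fourier n).continuous
  -- decompose the LHS
  have hsplit : ∫ x, fourier (-n) x ∂μ
      = ((∫ x, Real.cos (a * angRepr x) ∂μ : ℝ) : ℂ)
        - ((∫ x, Real.sin (a * angRepr x) ∂μ : ℝ) : ℂ) * Complex.I := by
    have hfx : ∀ x : AddCircle (2 * Real.pi), (fourier (-n) x : ℂ)
        = ((Real.cos (a * angRepr x) : ℝ) : ℂ)
          - ((Real.sin (a * angRepr x) : ℝ) : ℂ) * Complex.I := by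
      intro x
      conv_lhs => rw [← coe_angRepr x]
      exact fourier_neg_coe n (angRepr x)
    rw [integral_congr_ae (Filter.Eventually.of_forall hfx)]
    have hIc : ∫ x, ((Real.cos (a * angRepr x) : ℝ) : ℂ) ∂μ
        = ((∫ x, Real.cos (a * angRepr x) ∂μ : ℝ) : ℂ) := integral_ofReal
    have hIs : ∫ x, ((Real.sin (a * angRepr x) : ℝ) : ℂ) ∂μ
        = ((∫ x, Real.sin (a * angRepr x) ∂μ : ℝ) : ℂ) := integral_ofReal
    rw [integral_sub, integral_mul_const, hIc, hIs]
    · exact (cont_integrable (Complex.continuous_ofReal.comp hcosc) μ)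
    · exact ((cont_integrable (Complex.continuous_ofReal.comp hsinc) μ).mul_const Complex.I)
  -- decompose the RHS integral
  have hRHS : (∫ t in (0:ℝ)..(2 * Real.pi), ((hfun (L : Set ℂ) t : ℝ) : ℂ) * fourier (-n) (t : AddCircle (2 * Real.pi)))
      = ((∫ t in (0:ℝ)..(2 * Real.pi), hfun (L : Set ℂ) t * Real.cos (a * t) : ℝ) : ℂ)
        - ((∫ t in (0:ℝ)..(2 * Real.pi), hfun (L : Set ℂ) t * Real.sin (a * t) : ℝ) : ℂ)
          * Complex.I := by
    have hfx : ∀ t : ℝ, ((hfun (L : Set ℂ) t : ℝ) : ℂ) * fourier (-n) (t : AddCircle (2 * Real.pi))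
        = ((hfun (L : Set ℂ) t * Real.cos (a * t) : ℝ) : ℂ)
          - ((hfun (L : Set ℂ) t * Real.sin (a * t) : ℝ) : ℂ) * Complex.I := by
      intro t
      rw [fourier_neg_coe n t]
      simp only [ha]
      push_cast
      ring
    rw [intervalIntegral.integral_congr (fun t _ => hfx t)]
    have hJc : (∫ t in (0:ℝ)..(2 * Real.pi), ((hfun (L : Set ℂ) t * Real.cos (a * t) : ℝ) : ℂ))
        = ((∫ t in (0:ℝ)..(2 * Real.pi), hfun (L : Set ℂ) t * Real.cos (a * t) : ℝ) : ℂ) :=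
      intervalIntegral.integral_ofReal
    have hJs : (∫ t in (0:ℝ)..(2 * Real.pi), ((hfun (L : Set ℂ) t * Real.sin (a * t) : ℝ) : ℂ))
        = ((∫ t in (0:ℝ)..(2 * Real.pi), hfun (L : Set ℂ) t * Real.sin (a * t) : ℝ) : ℂ) :=
      intervalIntegral.integral_ofReal
    rw [intervalIntegral.integral_sub, intervalIntegral.integral_mul_const, hJc, hJs]
    · exact (Complex.continuous_ofReal.comp
        ((continuous_hfun L).mul (Real.continuous_cos.comp (continuous_const.mul continuous_id)))).intervalIntegrable _ _
    · exact ((Complex.continuous_ofReal.comp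
        ((continuous_hfun L).mul (Real.continuous_sin.comp (continuous_const.mul continuous_id)))).intervalIntegrable _ _).mul_const _
  rw [hsplit, hRHS, hcos, hsin]
  simp only [ha]
  push_cast
  ring

lemma conv_continuous (μ : Measure (AddCircle (2 * Real.pi))) [IsFiniteMeasure μ]
    (f : AddCircle (2 * Real.pi) → ℝ) (hf : Continuous f) :
    Continuous (fun y : AddCircle (2 * Real.pi) => ∫ x, f (y - x) ∂μ) := by
  obtain ⟨Cb, hCb⟩ := (isCompact_range hf.norm).bddAbove
  refine continuous_iff_continuousAt.mpr fun y => ?_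
  apply continuousAt_of_dominated (bound := fun _ => Cb)
  · exact Filter.Eventually.of_forall fun y' =>
      (hf.comp (continuous_const.sub continuous_id)).aestronglyMeasurable
  · exact Filter.Eventually.of_forall fun y' =>
      Filter.Eventually.of_forall fun x => hCb ⟨y' - x, rfl⟩
  · exact integrable_const _
  · exact Filter.Eventually.of_forall fun x =>
      (hf.comp (continuous_id.sub continuous_const)).continuousAt

lemma conv_coeff (μ : Measure (AddCircle (2 * Real.pi))) [IsFiniteMeasure μ]
    (f : AddCircle (2 * Real.pi) → ℝ) (hf : Continuous f) (n : ℤ) :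
    fourierCoeff (fun y : AddCircle (2 * Real.pi) => ((∫ x, f (y - x) ∂μ : ℝ) : ℂ)) n
      = (∫ x, fourier (-n) x ∂μ)
          * fourierCoeff (fun y : AddCircle (2 * Real.pi) => ((f y : ℝ) : ℂ)) n := by
  have h1 : ∀ y : AddCircle (2 * Real.pi),
      fourier (-n) y • ((∫ x, f (y - x) ∂μ : ℝ) : ℂ)
        = ∫ x, fourier (-n) y * ((f (y - x) : ℝ) : ℂ) ∂μ := by
    intro y
    have hr : ((∫ x, f (y - x) ∂μ : ℝ) : ℂ) = ∫ x, ((f (y - x) : ℝ) : ℂ) ∂μ :=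
      integral_ofReal.symm
    rw [smul_eq_mul, hr, integral_const_mul]
  rw [fourierCoeff]
  simp_rw [h1]
  have hunc : Continuous (Function.uncurry
      (fun (y x : AddCircle (2 * Real.pi)) => fourier (-n) y * ((f (y - x) : ℝ) : ℂ))) := by
    apply Continuous.mul
    · exact (fourier (-n)).continuous.comp continuous_fst
    · exact Complex.continuous_ofReal.comp (hf.comp (continuous_fst.sub continuous_snd))
  have hswap := integral_integral_swap_of_hasCompactSupport hunc
    ((isClosed_tsupport _).isCompact) (μ := (AddCircle.haarAddCircle : Measure (AddCircle (2 * Real.pi))))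
    (ν := μ)
  rw [hswap]
  have h2 : ∀ x : AddCircle (2 * Real.pi),
      (∫ y, fourier (-n) y * ((f (y - x) : ℝ) : ℂ) ∂(AddCircle.haarAddCircle))
        = fourier (-n) x * ∫ y, fourier (-n) y * ((f y : ℝ) : ℂ) ∂(AddCircle.haarAddCircle) := by
    intro x
    have ht := integral_add_right_eq_self (μ := (AddCircle.haarAddCircle : Measure (AddCircle (2 * Real.pi))))
      (fun y => fourier (-n) y * ((f (y - x) : ℝ) : ℂ)) x
    rw [← ht]
    have : ∀ y : AddCircle (2 * Real.pi),
        fourier (-n) (y + x) * ((f (y + x - x) : ℝ) : ℂ)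
          = fourier (-n) x * (fourier (-n) y * ((f y : ℝ) : ℂ)) := by
      intro y
      rw [fourier_pt_add, add_sub_cancel_right]
      ring
    simp_rw [this]
    rw [integral_const_mul]
  simp_rw [h2]
  rw [integral_mul_const]
  rw [fourierCoeff]
  congr 1

lemma fourierCoeff_inj (f g : C(AddCircle (2 * Real.pi), ℂ))
    (h : ∀ n : ℤ, fourierCoeff (⇑f) n = fourierCoeff (⇑g) n) : f = g := by
  apply ContinuousMap.toLp_injective (E := ℂ) (p := 2) (𝕜 := ℂ)
    (AddCircle.haarAddCircle : Measure (AddCircle (2 * Real.pi)))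
  apply fourierBasis.repr.injective
  ext i
  rw [fourierBasis_repr, fourierBasis_repr, fourierCoeff_toLp, fourierCoeff_toLp]
  exact h i

lemma conv_symm (C K : ConvexBody ℂ) (μC μK : Measure (AddCircle (2 * Real.pi)))
    [IsFiniteMeasure μC] [IsFiniteMeasure μK]
    (hμC : IsSAM (C : Set ℂ) μC) (hμK : IsSAM (K : Set ℂ) μK) (θ : ℝ) :
    ∫ x, hfun (K : Set ℂ) (θ - angRepr x) ∂μC
      = ∫ x, hfun (C : Set ℂ) (θ - angRepr x) ∂μK := by
  set fK := liftH (K : Set ℂ) with hfK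
  set fC := liftH (C : Set ℂ) with hfC
  have hfKc : Continuous fK := continuous_liftH K
  have hfCc : Continuous fC := continuous_liftH C
  -- the interval-integral coefficients
  set J : Set ℂ → ℤ → ℂ := fun L n =>
    ∫ t in (0:ℝ)..(2 * Real.pi), ((hfun L t : ℝ) : ℂ) * fourier (-n) (t : AddCircle (2 * Real.pi))
    with hJ
  -- Fourier coefficients of the lifted support functions
  have hcoeff : ∀ (L : Set ℂ) (hL : Function.Periodic (hfun L) (2 * Real.pi)) (n : ℤ),
      fourierCoeff (fun y : AddCircle (2 * Real.pi) => ((liftH L y : ℝ) : ℂ)) n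
        = (1 / (2 * Real.pi) : ℝ) • J L n := by
    intro L hL n
    rw [fourierCoeff_eq_intervalIntegral _ n 0]
    congr 1
    rw [zero_add]
    apply intervalIntegral.integral_congr
    intro t _
    show fourier (-n) (t : AddCircle (2 * Real.pi)) • ((liftH L ↑t : ℝ) : ℂ)
        = ((hfun L t : ℝ) : ℂ) * fourier (-n) (t : AddCircle (2 * Real.pi))
    rw [smul_eq_mul, liftH_coe, mul_comm]
  -- the two convolutions
  set g₁ : AddCircle (2 * Real.pi) → ℝ := fun y => ∫ x, fK (y - x) ∂μC with hg₁
  set g₂ : AddCircle (2 * Real.pi) → ℝ := fun y => ∫ x, fC (y - x) ∂μK with hg₂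
  have hg₁c : Continuous fun y => ((g₁ y : ℝ) : ℂ) :=
    Complex.continuous_ofReal.comp (conv_continuous μC fK hfKc)
  have hg₂c : Continuous fun y => ((g₂ y : ℝ) : ℂ) :=
    Complex.continuous_ofReal.comp (conv_continuous μK fC hfCc)
  have hcoe : ∀ n : ℤ, fourierCoeff (fun y => ((g₁ y : ℝ) : ℂ)) n
      = fourierCoeff (fun y => ((g₂ y : ℝ) : ℂ)) n := by
    intro n
    rw [hg₁, hg₂]
    rw [conv_coeff μC fK hfKc n, conv_coeff μK fC hfCc n]
    rw [sam_fourier C μC hμC n, sam_fourier K μK hμK n]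
    rw [hcoeff (K : Set ℂ) (hfun_periodic _) n, hcoeff (C : Set ℂ) (hfun_periodic _) n]
    rw [Complex.real_smul, Complex.real_smul]
    ring
  have heq : (⟨fun y => ((g₁ y : ℝ) : ℂ), hg₁c⟩ : C(AddCircle (2 * Real.pi), ℂ))
      = ⟨fun y => ((g₂ y : ℝ) : ℂ), hg₂c⟩ := fourierCoeff_inj _ _ hcoe
  have heval : g₁ ((θ : ℝ) : AddCircle (2 * Real.pi)) = g₂ ((θ : ℝ) : AddCircle (2 * Real.pi)) := by
    have := congrArg (fun F : C(AddCircle (2 * Real.pi), ℂ) => F ((θ : ℝ) : AddCircle (2 * Real.pi))) heq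
    simpa using this
  have hint1 : ∀ x : AddCircle (2 * Real.pi),
      hfun (K : Set ℂ) (θ - angRepr x) = fK (((θ : ℝ) : AddCircle (2 * Real.pi)) - x) := by
    intro x
    rw [hfK, ← liftH_coe (K : Set ℂ) (θ - angRepr x)]
    congr 1
    conv_rhs => rw [← coe_angRepr x]
    exact QuotientAddGroup.mk_sub _ _ _
  have hint2 : ∀ x : AddCircle (2 * Real.pi),
      hfun (C : Set ℂ) (θ - angRepr x) = fC (((θ : ℝ) : AddCircle (2 * Real.pi)) - x) := by
    intro x
    rw [hfC, ← liftH_coe (C : Set ℂ) (θ - angRepr x)]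
    congr 1
    conv_rhs => rw [← coe_angRepr x]
    exact QuotientAddGroup.mk_sub _ _ _
  simp_rw [hint1, hint2]
  exact heval

lemma subset_of_hsupp_le (D₁ D₂ : ConvexBody ℂ)
    (h : ∀ ξ : ℂ, hsupp (D₁ : Set ℂ) ξ ≤ hsupp (D₂ : Set ℂ) ξ) :
    (D₁ : Set ℂ) ⊆ (D₂ : Set ℂ) := by
  intro x hx
  by_contra hnx
  obtain ⟨f, u, hfu, hux⟩ :=
    geometric_hahn_banach_closed_point D₂.convex D₂.isCompact.isClosed hnx
  set ξ : ℂ := ⟨f 1, f Complex.I⟩ with hξ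
  have hfz : ∀ z : ℂ, f z = (inner ℂ z ξ : ℂ).re := by
    intro z
    have h1 : (inner ℂ z ξ : ℂ).re = z.re * f 1 + z.im * f Complex.I := by
      simp only [RCLike.inner_apply, Complex.mul_re, Complex.conj_re, Complex.conj_im, hξ]
      ring
    have hz : z = z.re • (1 : ℂ) + z.im • Complex.I := by
      simp [Complex.real_smul, Complex.re_add_im]
    rw [h1]
    conv_lhs => rw [hz]
    rw [map_add, _root_.map_smul, _root_.map_smul, smul_eq_mul, smul_eq_mul]
  have hcont : Continuous (fun z : ℂ => (inner ℂ z ξ : ℂ).re) :=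
    Complex.continuous_re.comp (continuous_id.inner continuous_const)
  have h1 : hsupp (D₂ : Set ℂ) ξ ≤ u := by
    apply csSup_le (D₂.nonempty.image _)
    rintro y ⟨b, hb, rfl⟩
    show (inner ℂ b ξ : ℂ).re ≤ u
    rw [← hfz b]
    exact (hfu b hb).le
  have h2 : f x ≤ hsupp (D₁ : Set ℂ) ξ := by
    rw [hfz x]
    exact le_csSup (D₁.isCompact.image_of_continuousOn hcont.continuousOn).bddAbove ⟨x, hx, rfl⟩
  have h3 := h ξ
  linarith


/-- for planar convex bodies `C, K`, the complex difference body operator is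
symmetric: `D_C K = D_K C`. -/
theorem stmt_9 (C K D₁ D₂ : ConvexBody ℂ)
    (μC μK : Measure (AddCircle (2 * Real.pi)))
    [IsFiniteMeasure μC] [IsFiniteMeasure μK]
    (hμC : IsSAM (C : Set ℂ) μC) (hμK : IsSAM (K : Set ℂ) μK)
    (h₁ : IsCDB μC (K : Set ℂ) (D₁ : Set ℂ))
    (h₂ : IsCDB μK (C : Set ℂ) (D₂ : Set ℂ)) :
    (D₁ : Set ℂ) = (D₂ : Set ℂ) := by

  have key : ∀ ξ : ℂ, hsupp (D₁ : Set ℂ) ξ = hsupp (D₂ : Set ℂ) ξ := by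
    intro ξ
    rcases eq_or_ne ξ 0 with rfl | hξ0
    · rw [h₁ 0, h₂ 0]
      have z1 : ∀ x : AddCircle (2 * Real.pi),
          hsupp (Complex.exp ((angRepr x : ℂ) * Complex.I) • (K : Set ℂ)) (0 : ℂ) = 0 :=
        fun x => hsupp_zero_dir _ (K.nonempty.smul_set)
      have z2 : ∀ x : AddCircle (2 * Real.pi),
          hsupp (Complex.exp ((angRepr x : ℂ) * Complex.I) • (C : Set ℂ)) (0 : ℂ) = 0 :=
        fun x => hsupp_zero_dir _ (C.nonempty.smul_set)
      simp_rw [z1, z2]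
      simp
    · set r : ℝ := ‖ξ‖ with hrdef
      set θ : ℝ := Complex.arg ξ with hθdef
      have hr : 0 ≤ r := norm_nonneg ξ
      have hξeq : ξ = r • Complex.exp ((θ : ℂ) * Complex.I) := by
        rw [Complex.real_smul]
        exact (Complex.norm_mul_exp_arg_mul_I ξ).symm
      rw [h₁ ξ, h₂ ξ]
      have e1 : ∀ x : AddCircle (2 * Real.pi),
          hsupp (Complex.exp ((angRepr x : ℂ) * Complex.I) • (K : Set ℂ)) ξ
            = r * hfun (K : Set ℂ) (θ - angRepr x) := by
        intro x
        rw [hξeq, hsupp_smul_nonneg _ hr, hsupp_exp_smul]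
      have e2 : ∀ x : AddCircle (2 * Real.pi),
          hsupp (Complex.exp ((angRepr x : ℂ) * Complex.I) • (C : Set ℂ)) ξ
            = r * hfun (C : Set ℂ) (θ - angRepr x) := by
        intro x
        rw [hξeq, hsupp_smul_nonneg _ hr, hsupp_exp_smul]
      simp_rw [e1, e2]
      rw [integral_const_mul, integral_const_mul]
      congr 1
      exact conv_symm C K μC μK hμC hμK θ
  apply Set.Subset.antisymm
  · exact subset_of_hsupp_le D₁ D₂ (fun ξ => (key ξ).le)
  · exact subset_of_hsupp_le D₂ D₁ (fun ξ => (key ξ).ge)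
end

section
/- Let C_N ⊂ ℂ be a regular polygon with N sides each of length 1/N, with outer unit edge normals α₁,…,α_N ∈ S¹ forming a cyclic group of order N under complex multiplication. Then for a convex body K in ℂ^m: D_{C_N} K = K if and only if α_i K = K for all i = 1,…,N. -/
open Pointwise

lemma sum_const_convex {E : Type*} [AddCommGroup E] [Module ℝ E] {s : Set E}
    (hs : Convex ℝ s) (hne : s.Nonempty) {ι : Type*} (t : Finset ι) :
    ∑ _i ∈ t, s = (t.card : ℝ) • s := by
  classical
  induction t using Finset.induction_on with
  | empty => simp [Set.zero_smul_set hne]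
  | insert a u hx ih =>
      rw [Finset.sum_insert hx, ih, Finset.card_insert_of_notMem hx,
        Nat.cast_add, Nat.cast_one, hs.add_smul (Nat.cast_nonneg _) zero_le_one,
        one_smul, add_comm]

/-- let `C_N ⊂ ℂ` be a regular polygon with `N` sides of length `1/N`,
whose outer unit normals `α₁, …, α_N ∈ S¹` form a (cyclic) group under complex
multiplication, so that `D_{C_N} K = (1/N) ∑ i, α i • K`. Then `D_{C_N} K = K` iff
`α i • K = K` for all `i`. -/
theorem stmt_17 (m N : ℕ) (hN : 0 < N) (α : Fin N → ℂ)
    (hα : ∀ i, ‖α i‖ = 1) (hinj : Function.Injective α)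
    (hgrp : ∀ i j, ∃ k, α i * α j = α k)
    (K D : ConvexBody (EuclideanSpace ℂ (Fin m)))
    (hD : (D : Set (EuclideanSpace ℂ (Fin m)))
        = (N : ℝ)⁻¹ • ∑ i, α i • (K : Set (EuclideanSpace ℂ (Fin m)))) :
    (D : Set (EuclideanSpace ℂ (Fin m))) = (K : Set (EuclideanSpace ℂ (Fin m))) ↔
      ∀ i, α i • (K : Set (EuclideanSpace ℂ (Fin m)))
        = (K : Set (EuclideanSpace ℂ (Fin m))) := by
  have hα0 : ∀ i, α i ≠ 0 := fun i h => by simpa [h] using hα i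
  constructor
  · intro hDK j
    -- σ : i ↦ k with α j * α i = α k
    choose σ hσ using fun i => hgrp j i
    have hσinj : Function.Injective σ := by
      intro i i' h
      apply hinj
      have h1 : α j * α i = α j * α i' := by rw [hσ i, hσ i', h]
      exact mul_left_cancel₀ (hα0 j) h1
    have hσbij : Function.Bijective σ := (Finite.injective_iff_bijective).mp hσinj
    have key : α j • (D : Set (EuclideanSpace ℂ (Fin m))) = D := by
      rw [hD, smul_comm, Finset.smul_sum]
      congr 1
      have : ∀ i, α j • α i • (K : Set (EuclideanSpace ℂ (Fin m)))
          = α (σ i) • (K : Set (EuclideanSpace ℂ (Fin m))) := by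
        intro i; rw [smul_smul, hσ i]
      simp_rw [this]
      exact Fintype.sum_bijective σ hσbij _ _ (fun i => rfl)
    rw [← hDK, key, hDK]
  · intro h
    rw [hD]
    have : ∀ i : Fin N, α i • (K : Set (EuclideanSpace ℂ (Fin m)))
        = (K : Set (EuclideanSpace ℂ (Fin m))) := h
    simp_rw [this]
    rw [sum_const_convex K.convex K.nonempty, Finset.card_univ, Fintype.card_fin,
      smul_smul, inv_mul_cancel₀ (by exact_mod_cast hN.ne'), one_smul]
end
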